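/- Let Γ be a countable group and μ an irreducible probability measure on Γ with period d = gcd{n ∈ ℕ : μ^{(n)}(e) > 0}. Then the normal subgroup Γ₀ = ⋃_{k≥1} S_μ^{-k} S_μ^{k} has index d in Γ, and the quotient group Γ/Γ₀ is cyclic of order d; more precisely, for any x₀ ∈ S_μ the cosets x₀^k Γ₀, k = 0, …, d−1, are pairwise distinct and exhaust Γ, and x₀^d Γ₀ = Γ₀. -/

import Mathlib

open Filter Topology
open scoped Pointwise Classical
set_option linter.unusedSectionVars false

/-- The `n`-th convolution power of a (probability) function `μ` on a group. -/
noncomputable def convPow {G : Type*} [Group G] (μ : G → ℝ) : ℕ → G → ℝ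
  | 0 => fun x => if x = 1 then 1 else 0
  | n + 1 => fun x => ∑' y : G, μ y * convPow μ n (y⁻¹ * x)

/-- The support `S_μ = {x : μ(x) > 0}`. -/
def msupp {G : Type*} [Group G] (μ : G → ℝ) : Set G := {g : G | 0 < μ g}

/-- `Γ₀ = ⋃_{k ≥ 1} S_μ^{-k} S_μ^{k}`. -/
def Gamma0 {G : Type*} [Group G] (μ : G → ℝ) : Set G :=
  ⋃ k ≥ 1, (msupp μ ^ k)⁻¹ * msupp μ ^ k

/-- `μ` is a probability measure on the countable group `G`. -/
def IsProbMeas {G : Type*} [Group G] (μ : G → ℝ) : Prop :=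
  (∀ x, 0 ≤ μ x) ∧ ∑' x : G, μ x = 1

/-- Irreducibility: the semigroup generated by the support is the whole group,
`⋃_{n ≥ 1} S_μ^n = Γ`. -/
def IsIrreducibleMeas {G : Type*} [Group G] (μ : G → ℝ) : Prop :=
  ∀ x : G, ∃ n : ℕ, 0 < n ∧ x ∈ msupp μ ^ n

/-- `d` is the period of `μ`, i.e. `d = gcd {n ∈ ℕ : μ⁽ⁿ⁾(e) > 0}`, characterized by:
`d` divides every element of the set, and every common divisor of the set divides `d`. -/
def IsPeriodOf {G : Type*} [Group G] (μ : G → ℝ) (d : ℕ) : Prop :=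
  (∀ n : ℕ, 0 < n → 0 < convPow μ n 1 → d ∣ n) ∧
  (∀ c : ℕ, (∀ n : ℕ, 0 < n → 0 < convPow μ n 1 → c ∣ n) → c ∣ d)

section Aux

variable {G : Type*} [Group G] [Countable G] {μ : G → ℝ}

lemma summable_mu (hprob : IsProbMeas μ) : Summable μ := by
  by_contra h
  have h2 := hprob.2
  rw [tsum_eq_zero_of_not_summable h] at h2
  exact one_ne_zero h2.symm

lemma convPow_nonneg (h0 : ∀ x, 0 ≤ μ x) : ∀ n x, 0 ≤ convPow μ n x
  | 0, x => by simp only [convPow]; split <;> norm_num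
  | n + 1, x => by
    simp only [convPow]
    exact tsum_nonneg fun y => mul_nonneg (h0 y) (convPow_nonneg h0 n _)

lemma convPow_le_one (hprob : IsProbMeas μ) : ∀ n x, convPow μ n x ≤ 1
  | 0, x => by simp only [convPow]; split <;> norm_num
  | n + 1, x => by
    simp only [convPow]
    have hsum : Summable (fun y => μ y * convPow μ n (y⁻¹ * x)) :=
      Summable.of_nonneg_of_le
        (fun y => mul_nonneg (hprob.1 y) (convPow_nonneg hprob.1 n _))
        (fun y => mul_le_of_le_one_right (hprob.1 y) (convPow_le_one hprob n _))
        (summable_mu hprob)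
    calc ∑' y : G, μ y * convPow μ n (y⁻¹ * x)
        ≤ ∑' y : G, μ y := Summable.tsum_le_tsum
          (fun y => mul_le_of_le_one_right (hprob.1 y) (convPow_le_one hprob n _))
          hsum (summable_mu hprob)
      _ = 1 := hprob.2

lemma convPow_summable (hprob : IsProbMeas μ) (n : ℕ) (x : G) :
    Summable (fun y => μ y * convPow μ n (y⁻¹ * x)) :=
  Summable.of_nonneg_of_le
    (fun y => mul_nonneg (hprob.1 y) (convPow_nonneg hprob.1 n _))
    (fun y => mul_le_of_le_one_right (hprob.1 y) (convPow_le_one hprob n _))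
    (summable_mu hprob)

lemma convPow_pos_iff (hprob : IsProbMeas μ) :
    ∀ n (x : G), (0 < convPow μ n x ↔ x ∈ msupp μ ^ n)
  | 0, x => by
    simp only [convPow, pow_zero, Set.mem_one]
    split <;> simp_all
  | n + 1, x => by
    constructor
    · intro hpos
      have hex : ∃ y, 0 < μ y * convPow μ n (y⁻¹ * x) := by
        by_contra h
        push_neg at h
        have hz : ∀ y, μ y * convPow μ n (y⁻¹ * x) = 0 := fun y =>
          le_antisymm (h y) (mul_nonneg (hprob.1 y) (convPow_nonneg hprob.1 n _))
        rw [show convPow μ (n+1) x = ∑' y : G, μ y * convPow μ n (y⁻¹ * x) from rfl] at hpos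
        simp only [hz, tsum_zero] at hpos
        exact lt_irrefl 0 hpos
      obtain ⟨y, hy⟩ := hex
      have h1 : 0 < μ y := by
        rcases (hprob.1 y).lt_or_eq with h | h
        · exact h
        · rw [← h, zero_mul] at hy; exact absurd hy (lt_irrefl 0)
      have h2 : 0 < convPow μ n (y⁻¹ * x) := by
        rcases (convPow_nonneg hprob.1 n (y⁻¹ * x)).lt_or_eq with h | h
        · exact h
        · rw [← h, mul_zero] at hy; exact absurd hy (lt_irrefl 0)
      have hmem : y⁻¹ * x ∈ msupp μ ^ n := (convPow_pos_iff hprob n _).1 h2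
      rw [pow_succ']
      have : x = y * (y⁻¹ * x) := by group
      rw [this]
      exact Set.mul_mem_mul h1 hmem
    · intro hx
      rw [pow_succ'] at hx
      obtain ⟨y, hy, z, hz, rfl⟩ := hx
      rw [show convPow μ (n+1) (y*z) = ∑' w : G, μ w * convPow μ n (w⁻¹ * (y*z)) from rfl]
      refine Summable.tsum_pos (convPow_summable hprob n _)
        (fun w => mul_nonneg (hprob.1 w) (convPow_nonneg hprob.1 n _)) y ?_
      have : y⁻¹ * (y * z) = z := by group
      rw [this]
      exact mul_pos hy ((convPow_pos_iff hprob n z).2 hz)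

lemma mem_pow_mul {S : Set G} {a b : G} {m n : ℕ} (ha : a ∈ S ^ m) (hb : b ∈ S ^ n) :
    a * b ∈ S ^ (m + n) := by
  rw [pow_add]; exact Set.mul_mem_mul ha hb

lemma one_mem_pow_mul {S : Set G} {m : ℕ} (h : (1 : G) ∈ S ^ m) :
    ∀ t : ℕ, (1 : G) ∈ S ^ (t * m)
  | 0 => by simp [Set.mem_one]
  | t + 1 => by
    have := mem_pow_mul (one_mem_pow_mul h t) h
    rw [one_mul] at this
    rwa [Nat.succ_mul]

end Aux

/-- Decomposition of elements of the closure of the ℤ-image of an additively closed set. -/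
lemma mem_closure_decomp {D : Set ℕ} (hadd : ∀ a ∈ D, ∀ b ∈ D, a + b ∈ D)
    {x : ℤ} (hx : x ∈ AddSubgroup.closure ((fun n : ℕ => (n : ℤ)) '' D)) :
    ∃ a b : ℕ, (a ∈ D ∨ a = 0) ∧ (b ∈ D ∨ b = 0) ∧ x = (a : ℤ) - b := by
  induction hx using AddSubgroup.closure_induction with
  | mem y hy =>
    obtain ⟨n, hn, rfl⟩ := hy
    exact ⟨n, 0, Or.inl hn, Or.inr rfl, by simp⟩
  | zero => exact ⟨0, 0, Or.inr rfl, Or.inr rfl, by simp⟩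
  | add y z _ _ hy hz =>
    obtain ⟨a1, b1, ha1, hb1, rfl⟩ := hy
    obtain ⟨a2, b2, ha2, hb2, rfl⟩ := hz
    refine ⟨a1 + a2, b1 + b2, ?_, ?_, by push_cast; ring⟩
    · rcases ha1 with h1 | h1
      · rcases ha2 with h2 | h2
        · exact Or.inl (hadd _ h1 _ h2)
        · subst h2; simpa using Or.inl h1
      · subst h1; simpa using ha2
    · rcases hb1 with h1 | h1
      · rcases hb2 with h2 | h2
        · exact Or.inl (hadd _ h1 _ h2)
        · subst h2; simpa using Or.inl h1
      · subst h1; simpa using hb2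
  | neg y _ hy =>
    obtain ⟨a, b, ha, hb, rfl⟩ := hy
    exact ⟨b, a, hb, ha, by ring⟩

/-- The key number-theoretic fact: if `D ⊆ ℕ` is nonempty, closed under addition, and has
gcd `d` (in the sense of the two divisibility properties), then `d = a - b` for some
`a, b ∈ D ∪ {0}`. -/
lemma exists_d_add {D : Set ℕ} (hadd : ∀ a ∈ D, ∀ b ∈ D, a + b ∈ D)
    {d : ℕ} (hd1 : ∀ n ∈ D, d ∣ n) (hd2 : ∀ c : ℕ, (∀ n ∈ D, c ∣ n) → c ∣ d) :
    ∃ a b : ℕ, (a ∈ D ∨ a = 0) ∧ (b ∈ D ∨ b = 0) ∧ a = d + b := by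
  set Dz : Set ℤ := (fun n : ℕ => (n : ℤ)) '' D with hDz
  obtain ⟨g, hg⟩ := Int.subgroup_cyclic (AddSubgroup.closure Dz)
  have hgdvd : ∀ n ∈ D, g.natAbs ∣ n := by
    intro n hn
    have hmem : (n : ℤ) ∈ AddSubgroup.closure Dz :=
      AddSubgroup.subset_closure ⟨n, hn, rfl⟩
    rw [hg, AddSubgroup.mem_closure_singleton] at hmem
    obtain ⟨m, hm⟩ := hmem
    have hdvd : g ∣ (n : ℤ) := ⟨m, by rw [← hm, zsmul_eq_mul, mul_comm]; norm_cast⟩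
    have := Int.natAbs_dvd_natAbs.mpr hdvd
    simpa using this
  have hgmem : g ∈ AddSubgroup.closure Dz := by
    rw [hg]; exact AddSubgroup.subset_closure rfl
  have hdg : (d : ℤ) ∣ g := by
    have hsub : Dz ⊆ (AddSubgroup.zmultiples (d : ℤ) : Set ℤ) := by
      rintro x ⟨n, hn, rfl⟩
      exact Int.mem_zmultiples_iff.2 (Int.natCast_dvd_natCast.2 (hd1 n hn))
    have hle := (AddSubgroup.closure_le (AddSubgroup.zmultiples (d : ℤ))).2 hsub
    exact Int.mem_zmultiples_iff.1 (hle hgmem)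
  have habs : g.natAbs = d := by
    refine Nat.dvd_antisymm (hd2 _ hgdvd) ?_
    have := Int.natAbs_dvd_natAbs.mpr hdg
    simpa using this
  have hdmem : (d : ℤ) ∈ AddSubgroup.closure Dz := by
    rcases Int.natAbs_eq g with h | h
    · rw [habs] at h; rwa [← h]
    · rw [habs] at h
      have := AddSubgroup.neg_mem _ hgmem
      rw [h, neg_neg] at this
      exact this
  obtain ⟨a, b, ha, hb, heq⟩ := mem_closure_decomp hadd hdmem
  refine ⟨a, b, ha, hb, ?_⟩
  have : (a : ℤ) = (d : ℤ) + b := by linarith [heq]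
  exact_mod_cast this

theorem stmt1 {G : Type*} [Group G] [Countable G] (μ : G → ℝ) (d : ℕ)
    (hprob : IsProbMeas μ) (hirr : IsIrreducibleMeas μ) (hd : IsPeriodOf μ d) :
    ∃ N : Subgroup G, ∃ hN : N.Normal, (N : Set G) = Gamma0 μ ∧ N.index = d ∧
      (letI := hN
       IsCyclic (G ⧸ N) ∧ Nat.card (G ⧸ N) = d) ∧
      ∀ x₀ ∈ msupp μ,
        (∀ j < d, ∀ k < d,
            ({x₀ ^ j} : Set G) * Gamma0 μ = ({x₀ ^ k} : Set G) * Gamma0 μ → j = k) ∧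
        (⋃ k < d, ({x₀ ^ k} : Set G) * Gamma0 μ) = Set.univ ∧
        ({x₀ ^ d} : Set G) * Gamma0 μ = Gamma0 μ := by
  -- translate the period condition to supports
  have hdvd : ∀ n : ℕ, 0 < n → (1 : G) ∈ msupp μ ^ n → d ∣ n := fun n hn h1 =>
    hd.1 n hn ((convPow_pos_iff hprob n 1).2 h1)
  -- d is positive
  obtain ⟨m, hm, h1m⟩ := hirr (1 : G)
  have hdpos : 0 < d := by
    rcases Nat.eq_zero_or_pos d with h | h
    · have := hdvd m hm h1m
      rw [h] at this
      omega
    · exact h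
  haveI : NeZero d := ⟨hdpos.ne'⟩
  -- the degree function
  choose deg hdegpos hdegmem using hirr
  -- key: the residue of n mod d only depends on x ∈ S^n
  have key : ∀ (x : G) (a b : ℕ), x ∈ msupp μ ^ a → x ∈ msupp μ ^ b →
      (a : ZMod d) = (b : ZMod d) := by
    intro x a b ha hb
    have hxp := hdegmem x⁻¹
    have hppos := hdegpos x⁻¹
    set p := deg x⁻¹ with hp
    have h1 : (1 : G) ∈ msupp μ ^ (a + p) := by
      have := mem_pow_mul ha hxp
      rwa [mul_inv_cancel] at this
    have h2 : (1 : G) ∈ msupp μ ^ (b + p) := by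
      have := mem_pow_mul hb hxp
      rwa [mul_inv_cancel] at this
    have d1 := hdvd _ (by omega) h1
    have d2 := hdvd _ (by omega) h2
    have e1 : ((a + p : ℕ) : ZMod d) = 0 := (CharP.cast_eq_zero_iff (ZMod d) d _).2 d1
    have e2 : ((b + p : ℕ) : ZMod d) = 0 := (CharP.cast_eq_zero_iff (ZMod d) d _).2 d2
    push_cast at e1 e2
    have : (a : ZMod d) + p = (b : ZMod d) + p := by rw [e1, e2]
    exact add_right_cancel this
  -- the "degree mod d" function
  set f : G → ZMod d := fun x => (deg x : ZMod d) with hf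
  have f_spec : ∀ (x : G) (n : ℕ), x ∈ msupp μ ^ n → f x = (n : ZMod d) :=
    fun x n h => key x (deg x) n (hdegmem x) h
  have f_mul : ∀ x y : G, f (x * y) = f x + f y := by
    intro x y
    have : x * y ∈ msupp μ ^ (deg x + deg y) := mem_pow_mul (hdegmem x) (hdegmem y)
    rw [f_spec _ _ this]
    push_cast
    rfl
  have f_one : f 1 = 0 := by
    have := hdvd (deg 1) (hdegpos 1) (hdegmem 1)
    exact (CharP.cast_eq_zero_iff (ZMod d) d _).2 this
  have f_inv : ∀ x : G, f x⁻¹ = -f x := by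
    intro x
    have := f_mul x x⁻¹
    rw [mul_inv_cancel, f_one] at this
    linear_combination -this
  -- the homomorphism
  set φ : G →* Multiplicative (ZMod d) :=
    MonoidHom.mk' (fun x => Multiplicative.ofAdd (f x))
      (fun a b => by
        show Multiplicative.ofAdd (f (a * b)) =
          Multiplicative.ofAdd (f a) * Multiplicative.ofAdd (f b)
        rw [f_mul]; exact ofAdd_add _ _) with hφ
  have hker : ∀ x : G, x ∈ φ.ker ↔ f x = 0 := by
    intro x
    rw [MonoidHom.mem_ker]
    show Multiplicative.ofAdd (f x) = 1 ↔ f x = 0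
    exact ofAdd_eq_one
  set N : Subgroup G := φ.ker with hN
  -- carrier equality
  have hsub1 : Gamma0 μ ⊆ (N : Set G) := by
    intro x hx
    rw [Gamma0] at hx
    simp only [Set.mem_iUnion] at hx
    obtain ⟨k, hk, hxk⟩ := hx
    obtain ⟨a, ha, b, hb, rfl⟩ := hxk
    rw [Set.mem_inv] at ha
    have hfa : f a = -(k : ZMod d) := by
      have := f_spec a⁻¹ k ha
      rw [f_inv] at this
      linear_combination -this
    have hfb : f b = (k : ZMod d) := f_spec b k hb
    rw [SetLike.mem_coe, hker, f_mul, hfa, hfb]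
    ring
  have hsub2 : (N : Set G) ⊆ Gamma0 μ := by
    intro x hx
    rw [SetLike.mem_coe, hker] at hx
    set D : Set ℕ := {n | 0 < n ∧ (1 : G) ∈ msupp μ ^ n} with hD
    have hadd : ∀ a ∈ D, ∀ b ∈ D, a + b ∈ D := by
      rintro a ⟨hapos, ha⟩ b ⟨hbpos, hb⟩
      refine ⟨by omega, ?_⟩
      have := mem_pow_mul ha hb
      rwa [one_mul] at this
    have hd1 : ∀ n ∈ D, d ∣ n := fun n hn => hdvd n hn.1 hn.2
    have hd2 : ∀ c : ℕ, (∀ n ∈ D, c ∣ n) → c ∣ d := by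
      intro c hc
      exact hd.2 c fun n hn hpos => hc n ⟨hn, (convPow_pos_iff hprob n 1).1 hpos⟩
    obtain ⟨a, b, ha, hb, heq⟩ := exists_d_add hadd hd1 hd2
    -- 1 ∈ S^a and 1 ∈ S^b
    have h1a : (1 : G) ∈ msupp μ ^ a := by
      rcases ha with h | h
      · exact h.2
      · subst h; simp [Set.mem_one]
    have h1b : (1 : G) ∈ msupp μ ^ b := by
      rcases hb with h | h
      · exact h.2
      · subst h; simp [Set.mem_one]
    -- d divides deg x
    have hddvd : d ∣ deg x := by
      have : (deg x : ZMod d) = 0 := hx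
      exact (CharP.cast_eq_zero_iff (ZMod d) d _).1 this
    set n := deg x with hn
    set t := n / d with ht
    have hnd : d * t = n := Nat.mul_div_cancel' hddvd
    have htpos : 0 < t := by
      have hnpos := hdegpos x
      rcases Nat.eq_zero_or_pos t with h | h
      · rw [h, Nat.mul_zero] at hnd; omega
      · exact h
    -- k := t * a = n + t * b
    have hk : t * a = n + t * b := by
      have : t * a = t * d + t * b := by rw [heq]; ring
      rw [Nat.mul_comm t d, hnd] at this
      exact this
    have h1ta : (1 : G) ∈ msupp μ ^ (t * a) := one_mem_pow_mul h1a t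
    have h1tb : (1 : G) ∈ msupp μ ^ (t * b) := one_mem_pow_mul h1b t
    have hxk : x ∈ msupp μ ^ (t * a) := by
      have := mem_pow_mul h1tb (hdegmem x)
      rw [one_mul] at this
      rwa [hk, Nat.add_comm]
    have hkpos : 1 ≤ t * a := by
      have := hdegpos x
      omega
    rw [Gamma0]
    simp only [Set.mem_iUnion]
    refine ⟨t * a, hkpos, ?_⟩
    refine ⟨1, ?_, x, hxk, one_mul x⟩
    rw [Set.mem_inv, inv_one]
    exact h1ta
  have hcar : (N : Set G) = Gamma0 μ := Set.Subset.antisymm hsub2 hsub1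
  -- surjectivity
  have hSne : ∃ x₀ : G, x₀ ∈ msupp μ := by
    by_contra h
    push_neg at h
    have : ∀ x : G, μ x = 0 := fun x =>
      le_antisymm (not_lt.1 fun hc => h x hc) (hprob.1 x)
    have h2 := hprob.2
    simp only [this, tsum_zero] at h2
    exact one_ne_zero h2.symm
  obtain ⟨x₀', hx₀'⟩ := hSne
  have f_pow : ∀ (x : G), x ∈ msupp μ → ∀ k : ℕ, f (x ^ k) = (k : ZMod d) := by
    intro x hx k
    exact f_spec _ k (Set.pow_mem_pow hx)
  have hsurj : Function.Surjective φ := by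
    intro z
    refine ⟨x₀' ^ (Multiplicative.toAdd z).val, ?_⟩
    show Multiplicative.ofAdd (f (x₀' ^ (Multiplicative.toAdd z).val)) = z
    rw [f_pow x₀' hx₀']
    rw [ZMod.natCast_rightInverse (Multiplicative.toAdd z)]
    rfl
  -- the quotient equivalence
  have e : G ⧸ N ≃* Multiplicative (ZMod d) :=
    QuotientGroup.quotientKerEquivOfSurjective φ hsurj
  have hcard : Nat.card (G ⧸ N) = d := by
    rw [Nat.card_congr e.toEquiv]
    exact Nat.card_zmod d
  refine ⟨N, MonoidHom.normal_ker φ, hcar, ?_, ⟨?_, hcard⟩, ?_⟩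
  · rw [Subgroup.index_eq_card, hcard]
  · exact isCyclic_of_surjective e.symm e.symm.surjective
  · intro x₀ hx₀
    have hf_pow := f_pow x₀ hx₀
    refine ⟨?_, ?_, ?_⟩
    · intro j hj k hk heq
      rw [← hcar] at heq
      have hmem : x₀ ^ j ∈ ({x₀ ^ j} : Set G) * (N : Set G) :=
        ⟨x₀ ^ j, rfl, 1, N.one_mem, mul_one _⟩
      rw [heq] at hmem
      obtain ⟨a, ha, g, hg, hprod⟩ := hmem
      rw [Set.mem_singleton_iff] at ha
      subst ha
      have hfg : f g = 0 := (hker g).1 hg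
      have : (j : ZMod d) = (k : ZMod d) := by
        have := congrArg f hprod
        rw [f_mul, hfg, add_zero, hf_pow, hf_pow] at this
        exact this.symm
      have hmod : j ≡ k [MOD d] := (ZMod.natCast_eq_natCast_iff _ _ _).1 this
      have : j % d = k % d := hmod
      rwa [Nat.mod_eq_of_lt hj, Nat.mod_eq_of_lt hk] at this
    · rw [← hcar]
      ext x
      simp only [Set.mem_iUnion, Set.mem_univ, iff_true]
      set r := (f x).val with hr
      refine ⟨r, ZMod.val_lt (f x), ?_⟩
      refine ⟨x₀ ^ r, rfl, (x₀ ^ r)⁻¹ * x, ?_, by group⟩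
      rw [SetLike.mem_coe, hker, f_mul, f_inv, hf_pow]
      rw [hr, ZMod.natCast_rightInverse (f x)]
      ring
    · rw [← hcar]
      apply Subgroup.singleton_mul_subgroup
      rw [hker, hf_pow, ZMod.natCast_self]
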